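/- Let n ≥ m ≥ 1 and let C₁,…,C_m be clauses, each consisting of exactly three literals over variables x₁,…,xₙ. Construct the following non-preemptive instance on 2n machines P₁,…,Pₙ, P̄₁,…,P̄ₙ with time horizon T = 8n: (variable jobs) for each i, one job on P_i and one job on P̄_i, each with window [0, 8n] and processing time 3n; (blocking jobs, each with window of length 1 equal to its processing time 1, hence fixed) for each i, a blocking job at time 3n + 2(i−1) on every machine except P_i, a blocking job at time 3n + 2(i−1) + 1 on every machine except P̄_i, and a blocking job at time 2n + (i−1) on every machine except P_i and P̄_i; (clause jobs) for each clause C_j, a blocking job at time 5n + j on every machine except the at most three machines corresponding to the literals of C_j (machine P_i for the literal x_i and machine P̄_i for the literal ¬x_i). Then there exists a truth assignment to x₁,…,xₙ satisfying all clauses if and only if there exists a feasible non-preemptive schedule such that the set of times t ∈ [0, 8n] at which every machine has some job in process has Lebesgue measure 0. -/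

import Mathlib

open MeasureTheory Set

/-- A machine: `(true, i)` is the path/machine `Pᵢ` (literal `xᵢ`) and `(false, i)` is the
machine `P̄ᵢ` (literal `¬xᵢ`). -/
abbrev Mach (n : ℕ) := Bool × Fin n

/-- The machine corresponding to a literal `(i, b)` (variable `xᵢ`, sign `b`). -/
def litMach {n : ℕ} (l : Fin n × Bool) : Mach n := (l.2, l.1)

/-- The set of times at which machine `μ` is occupied by (fixed) blocking jobs:
for each variable `i` a blocking job at time `3n + 2(i−1)` on every machine except `Pᵢ`,
one at time `3n + 2(i−1) + 1` on every machine except `P̄ᵢ`, one at time `2n + (i−1)` on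
every machine except `Pᵢ` and `P̄ᵢ`, and for each clause `Cⱼ` a blocking job at time `5n + j`
on every machine except those of the literals of `Cⱼ`. (Indices `i, j` below are 0-indexed.) -/
def blocked (n m : ℕ) (C : Fin m → Fin 3 → Fin n × Bool) (μ : Mach n) : Set ℝ :=
  (⋃ i : Fin n, ⋃ (_ : μ ≠ (true, i)),
      Set.Icc ((3 * n : ℕ) + 2 * (i : ℝ)) ((3 * n : ℕ) + 2 * (i : ℝ) + 1)) ∪
  (⋃ i : Fin n, ⋃ (_ : μ ≠ (false, i)),
      Set.Icc ((3 * n : ℕ) + 2 * (i : ℝ) + 1) ((3 * n : ℕ) + 2 * (i : ℝ) + 2)) ∪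
  (⋃ i : Fin n, ⋃ (_ : μ.2 ≠ i),
      Set.Icc ((2 * n : ℕ) + (i : ℝ)) ((2 * n : ℕ) + (i : ℝ) + 1)) ∪
  (⋃ j : Fin m, ⋃ (_ : ∀ l : Fin 3, μ ≠ litMach (C j l)),
      Set.Icc ((5 * n : ℕ) + ((j : ℝ) + 1)) ((5 * n : ℕ) + ((j : ℝ) + 1) + 1))

/-- Machine `μ` is busy at time `t` if its variable job (of processing time `3n`, started at
`sv μ`) or one of its blocking jobs is in process at `t`. -/
def busyAt (n m : ℕ) (C : Fin m → Fin 3 → Fin n × Bool) (sv : Mach n → ℝ)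
    (μ : Mach n) (t : ℝ) : Prop :=
  t ∈ Set.Icc (sv μ) (sv μ + (3 * n : ℕ)) ∨ t ∈ blocked n m C μ

lemma floor_trap {k a : ℕ} {t : ℝ} (hk1 : (k:ℝ) < t) (hk2 : t < (k:ℝ) + 1)
    (h1 : (a:ℝ) ≤ t) (h2 : t ≤ (a:ℝ) + 1) : k = a := by
  have h3 : a < k + 1 := by exact_mod_cast h1.trans_lt hk2
  have h4 : k < a + 1 := by exact_mod_cast hk1.trans_le h2
  omega

lemma not_blocked {n m : ℕ} {C : Fin m → Fin 3 → Fin n × Bool} {μ : Mach n} {t : ℝ} {k : ℕ}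
    (hk1 : (k:ℝ) < t) (hk2 : t < (k:ℝ) + 1)
    (H1 : ∀ i : Fin n, k = 3*n + 2*(i:ℕ) → μ = (true, i))
    (H2 : ∀ i : Fin n, k = 3*n + 2*(i:ℕ) + 1 → μ = (false, i))
    (H3 : ∀ i : Fin n, k = 2*n + (i:ℕ) → μ.2 = i)
    (H4 : ∀ j : Fin m, k = 5*n + (j:ℕ) + 1 → ∃ l, μ = litMach (C j l)) :
    t ∉ blocked n m C μ := by
  intro ht
  simp only [blocked, Set.mem_union, Set.mem_iUnion, Set.mem_Icc, exists_prop] at ht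
  rcases ht with ((⟨i, hne, hl, hr⟩ | ⟨i, hne, hl, hr⟩) | ⟨i, hne, hl, hr⟩) | ⟨j, hne, hl, hr⟩
  · exact hne (H1 i (floor_trap hk1 hk2 (by push_cast at hl ⊢; linarith)
      (by push_cast at hr ⊢; linarith)))
  · exact hne (H2 i (floor_trap hk1 hk2 (by push_cast at hl ⊢; linarith)
      (by push_cast at hr ⊢; linarith)))
  · exact hne (H3 i (floor_trap hk1 hk2 (by push_cast at hl ⊢; linarith)
      (by push_cast at hr ⊢; linarith)))
  · obtain ⟨l, hl'⟩ := H4 j (floor_trap hk1 hk2 (by push_cast at hl ⊢; linarith)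
      (by push_cast at hr ⊢; linarith))
    exact hne l hl'

lemma blocked_of1 {n m : ℕ} {C : Fin m → Fin 3 → Fin n × Bool} {μ : Mach n} {t : ℝ}
    (i : Fin n) (hne : μ ≠ (true, i))
    (h1 : 3*(n:ℝ) + 2*(i:ℕ) ≤ t) (h2 : t ≤ 3*(n:ℝ) + 2*(i:ℕ) + 1) : t ∈ blocked n m C μ := by
  simp only [blocked, Set.mem_union, Set.mem_iUnion, Set.mem_Icc, exists_prop]
  exact Or.inl (Or.inl (Or.inl ⟨i, hne, by push_cast; linarith, by push_cast; linarith⟩))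

lemma blocked_of2 {n m : ℕ} {C : Fin m → Fin 3 → Fin n × Bool} {μ : Mach n} {t : ℝ}
    (i : Fin n) (hne : μ ≠ (false, i))
    (h1 : 3*(n:ℝ) + 2*(i:ℕ) + 1 ≤ t) (h2 : t ≤ 3*(n:ℝ) + 2*(i:ℕ) + 2) : t ∈ blocked n m C μ := by
  simp only [blocked, Set.mem_union, Set.mem_iUnion, Set.mem_Icc, exists_prop]
  exact Or.inl (Or.inl (Or.inr ⟨i, hne, by push_cast; linarith, by push_cast; linarith⟩))

lemma blocked_of3 {n m : ℕ} {C : Fin m → Fin 3 → Fin n × Bool} {μ : Mach n} {t : ℝ}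
    (i : Fin n) (hne : μ.2 ≠ i)
    (h1 : 2*(n:ℝ) + (i:ℕ) ≤ t) (h2 : t ≤ 2*(n:ℝ) + (i:ℕ) + 1) : t ∈ blocked n m C μ := by
  simp only [blocked, Set.mem_union, Set.mem_iUnion, Set.mem_Icc, exists_prop]
  exact Or.inl (Or.inr ⟨i, hne, by push_cast; linarith, by push_cast; linarith⟩)

lemma blocked_of4 {n m : ℕ} {C : Fin m → Fin 3 → Fin n × Bool} {μ : Mach n} {t : ℝ}
    (j : Fin m) (hne : ∀ l : Fin 3, μ ≠ litMach (C j l))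
    (h1 : 5*(n:ℝ) + (j:ℕ) + 1 ≤ t) (h2 : t ≤ 5*(n:ℝ) + (j:ℕ) + 2) : t ∈ blocked n m C μ := by
  simp only [blocked, Set.mem_union, Set.mem_iUnion, Set.mem_Icc, exists_prop]
  exact Or.inr ⟨j, hne, by push_cast; linarith, by push_cast; linarith⟩

/-- The schedule built from an assignment. -/
def svA (n : ℕ) (A : Fin n → Bool) (μ : Mach n) : ℝ :=
  if A μ.2 = μ.1 then 0 else ((3*n + 2*(μ.2 : ℕ) + (if μ.1 then 1 else 2) : ℕ) : ℝ)


lemma svA_early {n : ℕ} {A : Fin n → Bool} {b : Bool} {i : Fin n} (h : A i = b) :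
    svA n A (b, i) = 0 := by simp [svA, h]

lemma svA_pos {n : ℕ} {A : Fin n → Bool} {i : Fin n} (h : A i = false) :
    svA n A (true, i) = ((3*n + 2*(i:ℕ) + 1 : ℕ) : ℝ) := by simp [svA, h]

lemma svA_neg {n : ℕ} {A : Fin n → Bool} {i : Fin n} (h : A i = true) :
    svA n A (false, i) = ((3*n + 2*(i:ℕ) + 2 : ℕ) : ℝ) := by simp [svA, h]

lemma not_busyAt {n m : ℕ} {C : Fin m → Fin 3 → Fin n × Bool} {sv : Mach n → ℝ}
    {μ : Mach n} {t : ℝ} {k : ℕ}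
    (hk1 : (k:ℝ) < t) (hk2 : t < (k:ℝ) + 1)
    (hvar : t < sv μ ∨ sv μ + ((3*n : ℕ) : ℝ) < t)
    (H1 : ∀ i : Fin n, k = 3*n + 2*(i:ℕ) → μ = (true, i))
    (H2 : ∀ i : Fin n, k = 3*n + 2*(i:ℕ) + 1 → μ = (false, i))
    (H3 : ∀ i : Fin n, k = 2*n + (i:ℕ) → μ.2 = i)
    (H4 : ∀ j : Fin m, k = 5*n + (j:ℕ) + 1 → ∃ l, μ = litMach (C j l)) :
    ¬ busyAt n m C sv μ t := by
  intro h
  rcases h with h | h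
  · rw [Set.mem_Icc] at h; rcases hvar with hv | hv <;> linarith [h.1, h.2]
  · exact not_blocked hk1 hk2 H1 H2 H3 H4 h

lemma forward_subset (n m : ℕ) (hn1 : 0 < n) (C : Fin m → Fin 3 → Fin n × Bool)
    (A : Fin n → Bool) (hA : ∀ j : Fin m, ∃ l : Fin 3, A (C j l).1 = (C j l).2) :
    {t ∈ Set.Icc (0 : ℝ) ((8 * n : ℕ) : ℝ) | ∀ μ : Mach n, busyAt n m C (svA n A) μ t}
      ⊆ Set.range ((↑) : ℕ → ℝ) := by
  intro t ht
  obtain ⟨⟨h0, h8⟩, hall⟩ := ht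
  by_contra hnr
  simp only [Set.mem_range, not_exists] at hnr
  set k := ⌊t⌋.toNat with hkdef
  have h0' : (0:ℤ) ≤ ⌊t⌋ := Int.floor_nonneg.mpr h0
  have hkk : (k:ℝ) = ((⌊t⌋ : ℤ) : ℝ) := by
    rw [hkdef]; exact_mod_cast congrArg (fun z : ℤ => (z:ℝ)) (Int.toNat_of_nonneg h0')
  have hk1 : (k:ℝ) < t := by
    refine lt_of_le_of_ne ?_ (hnr k)
    rw [hkk]; exact Int.floor_le t
  have hk2 : t < (k:ℝ) + 1 := by rw [hkk]; exact Int.lt_floor_add_one t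
  have hgt : ∀ a : ℕ, a ≤ k → (a:ℝ) < t := fun a ha =>
    lt_of_le_of_lt (Nat.cast_le.mpr ha) hk1
  have hlt : ∀ a : ℕ, k + 1 ≤ a → t < (a:ℝ) := by
    intro a ha
    have h' : ((k+1 : ℕ):ℝ) ≤ (a:ℝ) := Nat.cast_le.mpr ha
    push_cast at h'; linarith
  by_cases hc1 : k < 2*n
  · -- before 2n : the "late" machine of variable 0 is free
    set i0 : Fin n := ⟨0, hn1⟩ with hi0
    have hiv : (i0 : ℕ) = 0 := rfl
    cases hAi : A i0 with
    | true =>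
      refine not_busyAt hk1 hk2 ?_ ?_ ?_ ?_ ?_ (hall (false, i0))
      · left; rw [svA_neg hAi]; exact hlt _ (by omega)
      all_goals intro x hx; exfalso; have := x.isLt; omega
    | false =>
      refine not_busyAt hk1 hk2 ?_ ?_ ?_ ?_ ?_ (hall (true, i0))
      · left; rw [svA_pos hAi]; exact hlt _ (by omega)
      all_goals intro x hx; exfalso; have := x.isLt; omega
  · by_cases hc2 : k < 3*n
    · -- on (2n+i, 2n+i+1) : the late machine of variable i is free
      set i : Fin n := ⟨k - 2*n, by omega⟩ with hidef
      have hiv : (i : ℕ) = k - 2*n := rfl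
      cases hAi : A i with
      | true =>
        refine not_busyAt hk1 hk2 ?_ ?_ ?_ ?_ ?_ (hall (false, i))
        · left; rw [svA_neg hAi]; exact hlt _ (by omega)
        · intro x hx; exfalso; have := x.isLt; omega
        · intro x hx; exfalso; have := x.isLt; omega
        · intro x hx; show i = x; exact Fin.ext (by omega)
        · intro x hx; exfalso; have := x.isLt; omega
      | false =>
        refine not_busyAt hk1 hk2 ?_ ?_ ?_ ?_ ?_ (hall (true, i))
        · left; rw [svA_pos hAi]; exact hlt _ (by omega)
        · intro x hx; exfalso; have := x.isLt; omega
        · intro x hx; exfalso; have := x.isLt; omega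
        · intro x hx; show i = x; exact Fin.ext (by omega)
        · intro x hx; exfalso; have := x.isLt; omega
    · by_cases hc3 : k < 5*n
      · rcases Nat.even_or_odd (k - 3*n) with ⟨i0, hpar⟩ | ⟨i0, hpar⟩
        · -- k = 3n + 2 i0 : machine P_{i0} is free
          set i : Fin n := ⟨i0, by omega⟩ with hidef
          have hiv : (i : ℕ) = i0 := rfl
          refine not_busyAt hk1 hk2 ?_ ?_ ?_ ?_ ?_ (hall (true, i))
          · cases hAi : A i with
            | true => right; rw [svA_early hAi]; rw [zero_add]; exact hgt _ (by omega)
            | false => left; rw [svA_pos hAi]; exact hlt _ (by omega)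
          · intro x hx; have hix : i = x := Fin.ext (by omega); rw [hix]
          · intro x hx; exfalso; omega
          · intro x hx; exfalso; have := x.isLt; omega
          · intro x hx; exfalso; have := x.isLt; omega
        · -- k = 3n + 2 i0 + 1 : machine P̄_{i0} is free
          set i : Fin n := ⟨i0, by omega⟩ with hidef
          have hiv : (i : ℕ) = i0 := rfl
          refine not_busyAt hk1 hk2 ?_ ?_ ?_ ?_ ?_ (hall (false, i))
          · cases hAi : A i with
            | false => right; rw [svA_early hAi]; rw [zero_add]; exact hgt _ (by omega)
            | true => left; rw [svA_neg hAi]; exact hlt _ (by omega)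
          · intro x hx; exfalso; omega
          · intro x hx; have hix : i = x := Fin.ext (by omega); rw [hix]
          · intro x hx; exfalso; have := x.isLt; omega
          · intro x hx; exfalso; have := x.isLt; omega
      · by_cases hc4 : k ≤ 5*n
        · -- k = 5n : any early machine is free
          set i0 : Fin n := ⟨0, hn1⟩ with hi0
          refine not_busyAt hk1 hk2 ?_ ?_ ?_ ?_ ?_ (hall (A i0, i0))
          · right; rw [svA_early rfl]; rw [zero_add]; exact hgt _ (by omega)
          · intro x hx; exfalso; have := x.isLt; omega
          · intro x hx; exfalso; have := x.isLt; omega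
          · intro x hx; exfalso; have := x.isLt; omega
          · intro x hx; exfalso; have := x.isLt; omega
        · by_cases hc5 : k ≤ 5*n + m
          · -- clause slot : the machine of a satisfied literal is free
            set j : Fin m := ⟨k - 5*n - 1, by omega⟩ with hjdef
            have hjv : (j : ℕ) = k - 5*n - 1 := rfl
            obtain ⟨l, hlsat⟩ := hA j
            have hsv : svA n A (litMach (C j l)) = 0 := by
              simp [svA, litMach, hlsat]
            refine not_busyAt hk1 hk2 ?_ ?_ ?_ ?_ ?_ (hall (litMach (C j l)))
            · right; rw [hsv, zero_add]; exact hgt _ (by omega)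
            · intro x hx; exfalso; have := x.isLt; omega
            · intro x hx; exfalso; have := x.isLt; omega
            · intro x hx; exfalso; have := x.isLt; omega
            · intro x hx
              have hjx : j = x := Fin.ext (by omega)
              exact ⟨l, by rw [← hjx]⟩
          · -- after all clause slots : any early machine is free
            set i0 : Fin n := ⟨0, hn1⟩ with hi0
            refine not_busyAt hk1 hk2 ?_ ?_ ?_ ?_ ?_ (hall (A i0, i0))
            · right; rw [svA_early rfl]; rw [zero_add]; exact hgt _ (by omega)
            · intro x hx; exfalso; have := x.isLt; omega
            · intro x hx; exfalso; have := x.isLt; omega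
            · intro x hx; exfalso; have := x.isLt; omega
            · intro x hx; exfalso; have := x.isLt; omega

lemma backward (n m : ℕ) (hm : 1 ≤ m) (hmn : m ≤ n) (C : Fin m → Fin 3 → Fin n × Bool)
    (sv : Mach n → ℝ) (hb : ∀ μ, 0 ≤ sv μ ∧ sv μ + ((3 * n : ℕ):ℝ) ≤ ((8 * n : ℕ):ℝ))
    (hvol : volume {t ∈ Set.Icc (0 : ℝ) ((8 * n : ℕ):ℝ) | ∀ μ : Mach n, busyAt n m C sv μ t} = 0) :
    ∃ A : Fin n → Bool, ∀ j : Fin m, ∃ l : Fin 3, A (C j l).1 = (C j l).2 := by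
  have hn1 : 1 ≤ n := hm.trans hmn
  have hnR : (1:ℝ) ≤ n := by exact_mod_cast hn1
  have hmR : (m:ℝ) ≤ n := by exact_mod_cast hmn
  have key : ∀ a b : ℝ, a < b →
      (∀ t ∈ Set.Ioo a b, t ∈ Set.Icc (0:ℝ) ((8*n:ℕ):ℝ) ∧ ∀ μ : Mach n, busyAt n m C sv μ t) →
      False := by
    intro a b hab hsub
    have hss : Set.Ioo a b ⊆
        {t ∈ Set.Icc (0 : ℝ) ((8 * n : ℕ):ℝ) | ∀ μ : Mach n, busyAt n m C sv μ t} := by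
      intro t ht; exact ⟨(hsub t ht).1, (hsub t ht).2⟩
    have h1 : volume (Set.Ioo a b) ≤ 0 := hvol ▸ measure_mono hss
    rw [Real.volume_Ioo] at h1
    have h2 := le_antisymm h1 zero_le
    rw [ENNReal.ofReal_eq_zero] at h2
    linarith
  have hcast : ∀ i : Fin n, (i:ℝ) + 1 ≤ n := fun i => by exact_mod_cast i.isLt
  have hcastm : ∀ j : Fin m, (j:ℝ) + 1 ≤ m := fun j => by exact_mod_cast j.isLt
  have hsv0 : ∀ μ, 0 ≤ sv μ := fun μ => (hb μ).1
  have hsv5 : ∀ μ, sv μ ≤ 5*(n:ℝ) := by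
    intro μ; have := (hb μ).2; push_cast at this; linarith
  -- constraint (1): P_i early or late
  have h1 : ∀ i : Fin n, sv (true, i) ≤ 2*(i:ℝ) ∨ 3*(n:ℝ) + 2*(i:ℝ) + 1 ≤ sv (true, i) := by
    intro i
    by_contra hcon
    push_neg at hcon
    obtain ⟨ha, ha'⟩ := hcon
    refine key (max (3*(n:ℝ) + 2*(i:ℕ)) (sv (true, i)))
      (min (3*(n:ℝ) + 2*(i:ℕ) + 1) (sv (true, i) + 3*(n:ℝ))) ?_ ?_
    · exact max_lt (lt_min (by linarith) (by linarith)) (lt_min (by linarith) (by linarith))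
    · intro t ⟨hta, htb⟩
      have ht1 : 3*(n:ℝ) + 2*(i:ℕ) < t := lt_of_le_of_lt (le_max_left _ _) hta
      have ht2 : sv (true, i) < t := lt_of_le_of_lt (le_max_right _ _) hta
      have ht3 : t < 3*(n:ℝ) + 2*(i:ℕ) + 1 := lt_of_lt_of_le htb (min_le_left _ _)
      have ht4 : t < sv (true, i) + 3*(n:ℝ) := lt_of_lt_of_le htb (min_le_right _ _)
      have hi' := hcast i
      have hi0 : (0:ℝ) ≤ (i:ℝ) := Nat.cast_nonneg _
      constructor
      · constructor
        · linarith
        · push_cast; linarith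
      · intro μ
        by_cases hμ : μ = (true, i)
        · left; rw [hμ, Set.mem_Icc]; push_cast; constructor <;> linarith
        · right; exact blocked_of1 i hμ (le_of_lt ht1) (le_of_lt ht3)
  -- constraint (2): P̄_i early or late
  have h2 : ∀ i : Fin n, sv (false, i) ≤ 2*(i:ℝ) + 1 ∨ 3*(n:ℝ) + 2*(i:ℝ) + 2 ≤ sv (false, i) := by
    intro i
    by_contra hcon
    push_neg at hcon
    obtain ⟨ha, ha'⟩ := hcon
    refine key (max (3*(n:ℝ) + 2*(i:ℕ) + 1) (sv (false, i)))
      (min (3*(n:ℝ) + 2*(i:ℕ) + 2) (sv (false, i) + 3*(n:ℝ))) ?_ ?_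
    · exact max_lt (lt_min (by linarith) (by linarith)) (lt_min (by linarith) (by linarith))
    · intro t ⟨hta, htb⟩
      have ht1 : 3*(n:ℝ) + 2*(i:ℕ) + 1 < t := lt_of_le_of_lt (le_max_left _ _) hta
      have ht2 : sv (false, i) < t := lt_of_le_of_lt (le_max_right _ _) hta
      have ht3 : t < 3*(n:ℝ) + 2*(i:ℕ) + 2 := lt_of_lt_of_le htb (min_le_left _ _)
      have ht4 : t < sv (false, i) + 3*(n:ℝ) := lt_of_lt_of_le htb (min_le_right _ _)
      have hi' := hcast i
      have hi0 : (0:ℝ) ≤ (i:ℝ) := Nat.cast_nonneg _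
      constructor
      · constructor
        · linarith
        · push_cast; linarith
      · intro μ
        by_cases hμ : μ = (false, i)
        · left; rw [hμ, Set.mem_Icc]; push_cast; constructor <;> linarith
        · right; exact blocked_of2 i hμ (le_of_lt ht1) (le_of_lt ht3)
  -- constraint (3): P_i or P̄_i starts after 2n+i+1
  have h3 : ∀ i : Fin n, 2*(n:ℝ) + (i:ℝ) + 1 ≤ sv (true, i) ∨
      2*(n:ℝ) + (i:ℝ) + 1 ≤ sv (false, i) := by
    intro i
    by_contra hcon
    push_neg at hcon
    obtain ⟨ha, ha'⟩ := hcon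
    refine key (max (2*(n:ℝ) + (i:ℕ)) (max (sv (true, i)) (sv (false, i))))
      (2*(n:ℝ) + (i:ℕ) + 1) ?_ ?_
    · exact max_lt (by linarith) (max_lt (by linarith) (by linarith))
    · intro t ⟨hta, htb⟩
      have ht1 : 2*(n:ℝ) + (i:ℕ) < t := lt_of_le_of_lt (le_max_left _ _) hta
      have ht2 : sv (true, i) < t :=
        lt_of_le_of_lt (le_trans (le_max_left _ _) (le_max_right _ _)) hta
      have ht3 : sv (false, i) < t :=
        lt_of_le_of_lt (le_trans (le_max_right _ _) (le_max_right _ _)) hta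
      have hi' := hcast i
      have hi0 : (0:ℝ) ≤ (i:ℝ) := Nat.cast_nonneg _
      constructor
      · constructor
        · linarith
        · push_cast; linarith
      · rintro ⟨bb, ii⟩
        by_cases hii : ii = i
        · subst hii
          left
          rw [Set.mem_Icc]
          have hs0t := hsv0 (true, ii)
          have hs0f := hsv0 (false, ii)
          push_cast
          cases bb
          · exact ⟨ht3.le, by linarith⟩
          · exact ⟨ht2.le, by linarith⟩
        · right; exact blocked_of3 i hii (le_of_lt ht1) htb.le
  -- constraint (4): each clause has a literal machine starting by 2n+j+1
  have h4 : ∀ j : Fin m, ∃ l : Fin 3, sv (litMach (C j l)) ≤ 2*(n:ℝ) + (j:ℝ) + 1 := by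
    intro j
    by_contra hcon
    push_neg at hcon
    have hj' := hcastm j
    have hj0 : (0:ℝ) ≤ (j:ℝ) := Nat.cast_nonneg _
    set s3 : ℝ := min (min (sv (litMach (C j 0))) (sv (litMach (C j 1))))
      (sv (litMach (C j 2))) with hs3
    have hmle : ∀ l : Fin 3, s3 ≤ sv (litMach (C j l)) := by
      intro l
      fin_cases l
      · exact le_trans (min_le_left _ _) (min_le_left _ _)
      · exact le_trans (min_le_left _ _) (min_le_right _ _)
      · exact min_le_right _ _
    have hmgt : 2*(n:ℝ) + (j:ℝ) + 1 < s3 :=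
      lt_min (lt_min (hcon 0) (hcon 1)) (hcon 2)
    refine key (5*(n:ℝ) + (j:ℕ) + 1) (min (5*(n:ℝ) + (j:ℕ) + 2) (s3 + 3*(n:ℝ))) ?_ ?_
    · exact lt_min (by linarith) (by linarith)
    · intro t ⟨hta, htb⟩
      have ht3 : t < 5*(n:ℝ) + (j:ℕ) + 2 := lt_of_lt_of_le htb (min_le_left _ _)
      have ht4 : t < s3 + 3*(n:ℝ) := lt_of_lt_of_le htb (min_le_right _ _)
      constructor
      · constructor
        · linarith
        · push_cast; linarith
      · intro μ
        by_cases hμ : ∃ l : Fin 3, μ = litMach (C j l)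
        · obtain ⟨l, rfl⟩ := hμ
          left
          rw [Set.mem_Icc]
          have hsle := hsv5 (litMach (C j l))
          have hmle' := hmle l
          push_cast
          constructor <;> linarith
        · push_neg at hμ
          right
          exact blocked_of4 j hμ hta.le ht3.le
  -- combine: for each i at least one of P_i, P̄_i is late
  have hlate : ∀ i : Fin n, 3*(n:ℝ) + 2*(i:ℝ) + 1 ≤ sv (true, i) ∨
      3*(n:ℝ) + 2*(i:ℝ) + 2 ≤ sv (false, i) := by
    intro i
    have hi' := hcast i
    have hi0 : (0:ℝ) ≤ (i:ℝ) := Nat.cast_nonneg _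
    rcases h3 i with h | h
    · left
      rcases h1 i with h' | h'
      · exfalso; linarith
      · exact h'
    · right
      rcases h2 i with h' | h'
      · exfalso; linarith
      · exact h'
  refine ⟨fun i => decide (sv (true, i) ≤ 2*(i:ℝ)), ?_⟩
  intro j
  obtain ⟨l, hl⟩ := h4 j
  refine ⟨l, ?_⟩
  have hj' := hcastm j
  have hj0 : (0:ℝ) ≤ (j:ℝ) := Nat.cast_nonneg _
  have hi' := hcast (C j l).1
  have hi0 : (0:ℝ) ≤ ((C j l).1 : ℝ) := Nat.cast_nonneg _
  rw [litMach] at hl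
  cases hbb : (C j l).2 with
  | true =>
    rw [hbb] at hl
    have : sv (true, (C j l).1) ≤ 2*((C j l).1 : ℝ) := by
      rcases h1 (C j l).1 with h' | h'
      · exact h'
      · exfalso; linarith
    simp [this]
  | false =>
    rw [hbb] at hl
    have hfe : sv (false, (C j l).1) ≤ 2*((C j l).1 : ℝ) + 1 := by
      rcases h2 (C j l).1 with h' | h'
      · exact h'
      · exfalso; linarith
    have hptl : 3*(n:ℝ) + 2*((C j l).1 : ℝ) + 1 ≤ sv (true, (C j l).1) := by
      rcases hlate (C j l).1 with h' | h'
      · exact h'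
      · exfalso; linarith
    have : ¬ (sv (true, (C j l).1) ≤ 2*((C j l).1 : ℝ)) := by linarith
    simp [this]

/-- **Theorem 4 (hardness on disjoint paths, reduction from 3SAT).** For `n ≥ m ≥ 1` and
clauses `C₁, …, C_m`, each a triple of literals over variables `x₁, …, xₙ`: the clauses are
simultaneously satisfiable if and only if the constructed instance on the `2n` machines
(with time horizon `T = 8n`) admits a feasible non-preemptive schedule — i.e. start times
`sv` of the variable jobs with `0 ≤ sv μ` and `sv μ + 3n ≤ 8n` — such that the set of times
in `[0, 8n]` at which every machine is busy has Lebesgue measure `0`. -/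
theorem disjoint_paths_3sat (n m : ℕ) (hm : 1 ≤ m) (hmn : m ≤ n)
    (C : Fin m → Fin 3 → Fin n × Bool) :
    (∃ A : Fin n → Bool, ∀ j : Fin m, ∃ l : Fin 3, A (C j l).1 = (C j l).2) ↔
    (∃ sv : Mach n → ℝ,
      (∀ μ, 0 ≤ sv μ ∧ sv μ + (3 * n : ℕ) ≤ (8 * n : ℕ)) ∧
      volume {t ∈ Set.Icc (0 : ℝ) (8 * n : ℕ) | ∀ μ : Mach n, busyAt n m C sv μ t} = 0) := by
  have hn1 : 1 ≤ n := hm.trans hmn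
  constructor
  · rintro ⟨A, hA⟩
    refine ⟨svA n A, ?_, ?_⟩
    · rintro ⟨bb, i⟩
      have hi : ((i:ℕ):ℝ) + 1 ≤ (n:ℝ) := by exact_mod_cast i.isLt
      cases bb <;>
        · simp only [svA]
          split
          · refine ⟨le_rfl, ?_⟩
            push_cast; linarith
          · refine ⟨Nat.cast_nonneg _, ?_⟩
            push_cast
            linarith
    · exact measure_mono_null (forward_subset n m hn1 C A hA)
        ((Set.countable_range _).measure_zero _)
  · rintro ⟨sv, hb, hvol⟩
    exact backward n m hm hmn C sv hb hvol
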